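/- Let μ < ν be valuations on K[x] and let φ ∈ KP(μ) be an MLV key polynomial for μ. Then: (1) if φ ∈ Φ_{μ,ν}, then the truncation ν_φ is a valuation on K[x] equal to the augmented valuation [μ; φ, ν(φ)], and μ < ν_φ ≤ ν; (2) if φ ∉ Φ_{μ,ν} and deg φ ≤ deg Φ_{μ,ν}, then ν_φ = μ; (3) if deg φ > deg Φ_{μ,ν}, then ν_φ is not a valuation (it fails multiplicativity for some pair of polynomials). -/

import Mathlib

open Polynomial

namespace KeyPolPaper

variable {K : Type*} [Field K] {Λ : Type*} [AddCommGroup Λ] [LinearOrder Λ] [IsOrderedAddMonoid Λ]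

/-- A valuation on `F[X]` with values in `Λ ∪ {∞}`: multiplicative, satisfies the
ultrametric inequality, and is finite on nonzero constants. -/
def IsValuation {F : Type*} [Field F] (w : F[X] → WithTop Λ) : Prop :=
  w 0 = ⊤ ∧ (∀ f g : F[X], w (f * g) = w f + w g) ∧
    (∀ f g : F[X], min (w f) (w g) ≤ w (f + g)) ∧
    ∀ a : F, a ≠ 0 → w (C a) ≠ ⊤

/-- `μ ≤ ν` for valuations on `K[X]`. -/
def ValLE (μ ν : K[X] → WithTop Λ) : Prop := ∀ f : K[X], μ f ≤ ν f

/-- `μ < ν` for valuations on `K[X]`. -/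
def ValLT (μ ν : K[X] → WithTop Λ) : Prop := ValLE μ ν ∧ μ ≠ ν

/-- ν-equivalence: `f ∼_ν g` iff `ν (f - g) > ν f`. -/
def VEquiv (ν : K[X] → WithTop Λ) (f g : K[X]) : Prop := ν f < ν (f - g)

/-- ν-divisibility: `h ∣_ν g` iff `g ∼_ν q * h` for some `q`. -/
def VDvd (ν : K[X] → WithTop Λ) (h g : K[X]) : Prop := ∃ q : K[X], VEquiv ν g (q * h)

/-- MacLane–Vaquié key polynomial: monic, ν-minimal and ν-irreducible. -/
def IsMLVKey (ν : K[X] → WithTop Λ) (φ : K[X]) : Prop :=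
  φ.Monic ∧ (∀ f : K[X], f ≠ 0 → f.natDegree < φ.natDegree → ¬ VDvd ν φ f) ∧
    ¬ VDvd ν φ 1 ∧ ∀ f g : K[X], VDvd ν φ (f * g) → VDvd ν φ f ∨ VDvd ν φ g

/-- `e` is the value `ε(f) = max_{b ≥ 1} (ν f - ν (∂_b f)) / b`; phrased multiplicatively,
`e` satisfies `ν f ≤ ν (∂_b f) + b • e` for all `b ≥ 1`, with equality for some `b ≥ 1`.
If `ν f = ∞` then `ε(f) = ∞`. -/
def IsEps (ν : K[X] → WithTop Λ) (f : K[X]) (e : WithTop Λ) : Prop :=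
  (ν f = ⊤ ∧ e = ⊤) ∨
    (ν f ≠ ⊤ ∧ (∀ b : ℕ, 1 ≤ b → ν f ≤ ν (hasseDeriv b f) + b • e) ∧
      ∃ b : ℕ, 1 ≤ b ∧ ν f = ν (hasseDeriv b f) + b • e)

/-- The invariant `ε(f)`; well defined (for non-constant `f`) since `Λ` is divisible and
the defining property determines `e` uniquely. -/
noncomputable def eps (ν : K[X] → WithTop Λ) (f : K[X]) : WithTop Λ :=
  letI := Classical.propDecidable (∃ e : WithTop Λ, IsEps ν f e)
  if h : ∃ e : WithTop Λ, IsEps ν f e then h.choose else ⊤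

/-- The set `I(f)` of indices `b ≥ 1` with `ν (∂_b f) = ν f - b • ε(f)`. -/
def epsAttain (ν : K[X] → WithTop Λ) (f : K[X]) : Set ℕ :=
  {b : ℕ | 1 ≤ b ∧ ν f = ν (hasseDeriv b f) + b • eps ν f}

/-- Abstract key polynomial for `ν`. -/
def IsKeyPoly (ν : K[X] → WithTop Λ) (Q : K[X]) : Prop :=
  Q.Monic ∧ 0 < Q.natDegree ∧
    ∀ f : K[X], 0 < f.natDegree → f.natDegree < Q.natDegree → eps ν f < eps ν Q

/-- The `s`-th coefficient of the canonical `Q`-expansion `f = Σ_s a_s Q^s`,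
`deg a_s < deg Q`. -/
noncomputable def qCoeff (Q f : K[X]) (s : ℕ) : K[X] := ((· /ₘ Q)^[s] f) %ₘ Q

/-- The truncation `ν_Q (f) = min_s ν (a_s Q^s)`. -/
noncomputable def trunc (ν : K[X] → WithTop Λ) (Q f : K[X]) : WithTop Λ :=
  (Finset.range (f.natDegree + 1)).inf fun s => ν (qCoeff Q f s * Q ^ s)

/-- `S_{ν,Q}(f)`: the set of indices attaining the minimum in `ν_Q(f)`. -/
def attain (ν : K[X] → WithTop Λ) (Q f : K[X]) : Set ℕ :=
  {s : ℕ | ν (qCoeff Q f s * Q ^ s) = trunc ν Q f}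

/-- The augmented valuation `[μ; φ, γ] (f) = min_s (μ (a_s) + s • γ)` on φ-expansions. -/
noncomputable def augVal (μ : K[X] → WithTop Λ) (φ : K[X]) (γ : WithTop Λ) (f : K[X]) :
    WithTop Λ :=
  (Finset.range (f.natDegree + 1)).inf fun s => μ (qCoeff φ f s) + s • γ

/-- `Φ_{μ,ν}`: monic polynomials of minimal degree with `μ φ < ν φ`. -/
def PhiSet (μ ν : K[X] → WithTop Λ) : Set K[X] :=
  {φ : K[X] | φ.Monic ∧ μ φ < ν φ ∧
    ∀ ψ : K[X], ψ.Monic → μ ψ < ν ψ → φ.natDegree ≤ ψ.natDegree}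

/-- `mult f`: the least `b ≥ 1` with `∂_b f ≠ 0`. -/
noncomputable def multOf (f : K[X]) : ℕ := sInf {b : ℕ | 1 ≤ b ∧ hasseDeriv b f ≠ 0}

/-- Abstract limit key polynomial for `ν` (conditions (K1)-(K4)). -/
def IsLimitKeyPoly (ν : K[X] → WithTop Λ) (Q : K[X]) : Prop :=
  Q.Monic ∧
    ∃ Qm : K[X], IsKeyPoly ν Qm ∧ ValLT (trunc ν Qm) ν ∧
      (∃ χ ∈ PhiSet (trunc ν Qm) ν, Qm.natDegree = χ.natDegree) ∧
      (∀ χ ∈ PhiSet (trunc ν Qm) ν, ∃ χ' ∈ PhiSet (trunc ν Qm) ν, ν χ < ν χ') ∧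
      (∀ χ ∈ PhiSet (trunc ν Qm) ν, trunc ν χ Q < ν Q) ∧
      ∀ Q' : K[X], Q'.Monic →
        (∀ χ ∈ PhiSet (trunc ν Qm) ν, trunc ν χ Q' < ν Q') → Q.natDegree ≤ Q'.natDegree

/-- A continuous MacLane chain of stable degree `m`: valuations `ρ_0 < ρ_1 < ⋯`,
monic key polynomials `χ_i` (for `i ≥ 1`) of degree `m`, with
`ρ_i = [ρ_{i-1}; χ_i, β_i]`, `β_i = ρ_i (χ_i) > ρ_{i-1} (χ_i)` and
`χ_{i+1} ∤_{ρ_i} χ_i`. -/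
structure MacLaneChain (K : Type*) [Field K] (Λ : Type*) [AddCommGroup Λ] [LinearOrder Λ] [IsOrderedAddMonoid Λ] where
  m : ℕ
  hm : 0 < m
  ρ : ℕ → K[X] → WithTop Λ
  χ : ℕ → K[X]
  β : ℕ → Λ
  isVal : ∀ i : ℕ, IsValuation (ρ i)
  mono : ∀ i : ℕ, ValLT (ρ i) (ρ (i + 1))
  monicChi : ∀ i : ℕ, (χ (i + 1)).Monic
  degChi : ∀ i : ℕ, (χ (i + 1)).natDegree = m
  keyChi : ∀ i : ℕ, IsMLVKey (ρ i) (χ (i + 1))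
  beta_def : ∀ i : ℕ, ρ (i + 1) (χ (i + 1)) = (β (i + 1) : WithTop Λ)
  beta_lt : ∀ i : ℕ, ρ i (χ (i + 1)) < (β (i + 1) : WithTop Λ)
  aug : ∀ i : ℕ, ρ (i + 1) = augVal (ρ i) (χ (i + 1)) (β (i + 1) : WithTop Λ)
  not_dvd : ∀ i : ℕ, ¬ VDvd (ρ (i + 1)) (χ (i + 2)) (χ (i + 1))

/-- A polynomial is stable w.r.t. the chain if its values `ρ_i f` are eventually constant. -/
def MacLaneChain.Stable (ch : MacLaneChain K Λ) (f : K[X]) : Prop :=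
  ∃ i0 : ℕ, ∀ i : ℕ, i0 ≤ i → ch.ρ i f = ch.ρ i0 f

/-- The chain is essential: non-stable polynomials exist and all have degree `> m`. -/
def MacLaneChain.Essential (ch : MacLaneChain K Λ) : Prop :=
  (∃ f : K[X], ¬ ch.Stable f) ∧ ∀ f : K[X], ¬ ch.Stable f → ch.m < f.natDegree

/-- MLV limit key polynomials of the chain: monic non-stable polynomials of minimal
degree `m_∞`. -/
def MacLaneChain.IsLimKP (ch : MacLaneChain K Λ) (φ : K[X]) : Prop :=
  φ.Monic ∧ ¬ ch.Stable φ ∧ ∀ f : K[X], ¬ ch.Stable f → φ.natDegree ≤ f.natDegree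

/-- Convex subgroup of a linearly ordered abelian group. -/
def IsConvexSubgroup (H : AddSubgroup Λ) : Prop :=
  ∀ x y : Λ, 0 < x → x < y → y ∈ H → x ∈ H

/-- The value group of a valuation: the subgroup of `Λ` generated by the finite values. -/
def valueGroup {F : Type*} [Field F] (ρ : F[X] → WithTop Λ) : AddSubgroup Λ :=
  AddSubgroup.closure {γ : Λ | ∃ f : F[X], ρ f = (γ : WithTop Λ)}



/-! ### Auxiliary lemmas -/

section Aux

variable {μ ν : K[X] → WithTop Λ}

lemma wt_add_lt_add {a b c d : WithTop Λ} (h1 : a < b) (h2 : c ≤ d) (hc : c ≠ ⊤) :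
    a + c < b + d :=
  lt_of_lt_of_le ((WithTop.add_lt_add_iff_right hc).2 h1) (add_le_add_right h2 b)

lemma IsValuation.zero' (hν : IsValuation ν) : ν 0 = ⊤ := hν.1

lemma IsValuation.mul' (hν : IsValuation ν) (f g : K[X]) : ν (f * g) = ν f + ν g := hν.2.1 f g

lemma IsValuation.min_le_add (hν : IsValuation ν) (f g : K[X]) :
    min (ν f) (ν g) ≤ ν (f + g) := hν.2.2.1 f g

lemma IsValuation.C_ne_top (hν : IsValuation ν) {a : K} (ha : a ≠ 0) : ν (C a) ≠ ⊤ :=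
  hν.2.2.2 a ha

lemma IsValuation.one' (hν : IsValuation ν) : ν 1 = 0 := by
  have h := hν.mul' 1 1
  rw [mul_one] at h
  have h1 : ν 1 ≠ ⊤ := by
    have := hν.C_ne_top (one_ne_zero (α := K))
    rwa [map_one] at this
  lift ν 1 to Λ using h1 with a ha
  rw [← WithTop.coe_add, WithTop.coe_inj] at h
  rw [show a = 0 from (left_eq_add.mp h)]
  rfl

lemma IsValuation.neg' (hν : IsValuation ν) (f : K[X]) : ν (-f) = ν f := by
  have hm1 : ν (-1 : K[X]) = 0 := by
    have h := hν.mul' (-1) (-1)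
    rw [neg_mul_neg, one_mul, hν.one'] at h
    have h1 : ν (-1 : K[X]) ≠ ⊤ := by
      intro ht; rw [ht, top_add] at h; exact WithTop.top_ne_zero h.symm
    lift ν (-1 : K[X]) to Λ using h1 with a ha
    rw [← WithTop.coe_add, eq_comm, WithTop.coe_eq_zero] at h
    have ha0 : a = 0 := by
      rcases lt_trichotomy a 0 with h' | h' | h'
      · exact absurd h (ne_of_lt (add_neg h' h'))
      · exact h'
      · exact absurd h (ne_of_gt (add_pos h' h'))
    rw [ha0]; rfl
  have h2 := hν.mul' (-1) f
  rw [neg_one_mul] at h2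
  rw [h2, hm1, zero_add]

lemma IsValuation.min_le_sub (hν : IsValuation ν) (f g : K[X]) :
    min (ν f) (ν g) ≤ ν (f - g) := by
  have := hν.min_le_add f (-g)
  rwa [hν.neg' g, ← sub_eq_add_neg] at this

/-- `ν (f + g) = ν f` when `ν f < ν g`. -/
lemma IsValuation.add_eq_left (hν : IsValuation ν) {f g : K[X]} (h : ν f < ν g) :
    ν (f + g) = ν f := by
  have h1 : min (ν f) (ν g) ≤ ν (f + g) := hν.min_le_add f g
  rw [min_eq_left h.le] at h1
  have h2 : min (ν (f + g)) (ν g) ≤ ν f := by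
    have h3 := hν.min_le_sub (f + g) g
    rwa [add_sub_cancel_right] at h3
  refine le_antisymm ?_ h1
  rcases le_or_gt (ν (f + g)) (ν g) with h' | h'
  · rwa [min_eq_left h'] at h2
  · rw [min_eq_right h'.le] at h2
    exact absurd (lt_of_le_of_lt h2 h) (lt_irrefl _)

/-- If `ν (f - g) > ν f` then `ν g = ν f`. -/
lemma IsValuation.eq_of_equiv (hν : IsValuation ν) {f g : K[X]} (h : ν f < ν (f - g)) :
    ν g = ν f := by
  have key : ν f < ν (-(f - g)) := by rwa [hν.neg']
  have hg := hν.add_eq_left key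
  rwa [show f + -(f - g) = g by ring] at hg

lemma IsValuation.pow' (hν : IsValuation ν) (f : K[X]) (n : ℕ) :
    ν (f ^ n) = n • ν f := by
  induction n with
  | zero => rw [pow_zero, zero_smul, hν.one']
  | succ n ih => rw [pow_succ, hν.mul', ih, succ_nsmul]

lemma IsValuation.pow_mul (hν : IsValuation ν) (a f : K[X]) (n : ℕ) :
    ν (a * f ^ n) = ν a + n • ν f := by rw [hν.mul', hν.pow']

end Aux

section Sums

variable {μ ν : K[X] → WithTop Λ}

lemma inf_range_succ' (f : ℕ → WithTop Λ) (n : ℕ) :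
    (Finset.range (n + 1)).inf f = min (f 0) ((Finset.range n).inf (fun s => f (s + 1))) := by
  induction n with
  | zero => simp
  | succ n ih =>
    rw [Finset.range_add_one, Finset.inf_insert, ih, Finset.range_add_one, Finset.inf_insert]
    exact min_left_comm _ _ _

lemma inf_add_const {ι : Type*} [DecidableEq ι] (t : Finset ι) (f : ι → WithTop Λ) (c : WithTop Λ) :
    t.inf f + c = t.inf (fun s => f s + c) := by
  induction t using Finset.induction with
  | empty => simp
  | insert _ _ _ ih =>
    rw [Finset.inf_insert, Finset.inf_insert, ← ih, ← min_add_add_right]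

lemma IsValuation.inf_le_sum (hν : IsValuation ν) {ι : Type*} (t : Finset ι) (h : ι → K[X]) :
    t.inf (fun i => ν (h i)) ≤ ν (∑ i ∈ t, h i) := by
  classical
  induction t using Finset.induction with
  | empty => simp [hν.zero']
  | @insert a s ha ih =>
    rw [Finset.sum_insert ha, Finset.inf_insert]
    exact le_trans (min_le_min le_rfl ih) (hν.min_le_add _ _)

/-- Dominated sums: if one term has value `v₀ ≠ ⊤` and all others have strictly bigger
value, the sum has value `v₀`. -/
lemma IsValuation.sum_eq_of_dominant (hν : IsValuation ν) {ι : Type*} [DecidableEq ι]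
    {t : Finset ι} {h : ι → K[X]} {i₀ : ι} (hi₀ : i₀ ∈ t) {v₀ : WithTop Λ}
    (hv₀ : ν (h i₀) = v₀) (htop : v₀ ≠ ⊤)
    (hother : ∀ i ∈ t, i ≠ i₀ → v₀ < ν (h i)) :
    ν (∑ i ∈ t, h i) = v₀ := by
  rw [← Finset.add_sum_erase t h hi₀]
  have hrest : v₀ < ν (∑ i ∈ t.erase i₀, h i) := by
    refine lt_of_lt_of_le ?_ (hν.inf_le_sum _ _)
    rw [Finset.lt_inf_iff (lt_top_iff_ne_top.mpr htop)]
    intro i hi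
    exact hother i (Finset.mem_of_mem_erase hi) (Finset.ne_of_mem_erase hi)
  rw [← hv₀] at hrest ⊢
  exact hν.add_eq_left hrest

end Sums

section QCoeff

variable {φ : K[X]}

lemma qCoeff_zero (Q f : K[X]) : qCoeff Q f 0 = f %ₘ Q := by
  simp [qCoeff]

lemma qCoeff_succ (Q f : K[X]) (s : ℕ) : qCoeff Q f (s + 1) = qCoeff Q (f /ₘ Q) s := by
  simp [qCoeff, Function.iterate_succ_apply]

lemma qCoeff_zero_left (Q : K[X]) (s : ℕ) : qCoeff Q 0 s = 0 := by
  induction s with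
  | zero => rw [qCoeff_zero, zero_modByMonic]
  | succ s ih => rw [qCoeff_succ, zero_divByMonic, ih]

lemma degree_qCoeff (hm : φ.Monic) (f : K[X]) (s : ℕ) :
    (qCoeff φ f s).degree < φ.degree :=
  degree_modByMonic_lt _ hm

lemma natDegree_qCoeff (hm : φ.Monic) (hd : 0 < φ.natDegree) (f : K[X]) (s : ℕ) :
    (qCoeff φ f s).natDegree < φ.natDegree := by
  by_cases h : qCoeff φ f s = 0
  · rw [h]; simpa using hd
  · exact natDegree_lt_natDegree h (degree_qCoeff hm f s)

lemma divByMonic_ne_zero_imp (hm : φ.Monic) {f : K[X]} (h : f /ₘ φ ≠ 0) :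
    φ.natDegree ≤ f.natDegree := by
  have := mt (divByMonic_eq_zero_iff hm).mpr h
  exact natDegree_le_natDegree (not_lt.mp this)

lemma qCoeff_eq_zero (hm : φ.Monic) (hd : 0 < φ.natDegree) {f : K[X]} {s : ℕ}
    (h : f.natDegree < s) : qCoeff φ f s = 0 := by
  induction s generalizing f with
  | zero => omega
  | succ s ih =>
    rw [qCoeff_succ]
    by_cases h0 : f /ₘ φ = 0
    · rw [h0, qCoeff_zero_left]
    · refine ih ?_
      have h1 := divByMonic_ne_zero_imp hm h0
      have h2 : (f /ₘ φ).natDegree = f.natDegree - φ.natDegree := natDegree_divByMonic f hm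
      omega

lemma qCoeff_expansion (hm : φ.Monic) (hd : 0 < φ.natDegree) {f : K[X]} {n : ℕ}
    (hn : f.natDegree < n) :
    ∑ s ∈ Finset.range n, qCoeff φ f s * φ ^ s = f := by
  induction n generalizing f with
  | zero => omega
  | succ n ih =>
    rw [Finset.sum_range_succ']
    have hterm : ∀ s : ℕ, qCoeff φ f (s + 1) * φ ^ (s + 1)
        = (qCoeff φ (f /ₘ φ) s * φ ^ s) * φ := by
      intro s; rw [qCoeff_succ, pow_succ]; ring
    rw [Finset.sum_congr rfl (fun s _ => hterm s), ← Finset.sum_mul]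
    by_cases h0 : f /ₘ φ = 0
    · have hf : f %ₘ φ = f := by
        have := modByMonic_add_div f φ
        rwa [h0, mul_zero, add_zero] at this
      rw [h0]
      simp only [qCoeff_zero_left, zero_mul, Finset.sum_const_zero]
      rw [qCoeff_zero, pow_zero, mul_one, hf, zero_add]
    · have h1 : (f /ₘ φ).natDegree < n := by
        have h2 := divByMonic_ne_zero_imp hm h0
        have h3 : (f /ₘ φ).natDegree = f.natDegree - φ.natDegree := natDegree_divByMonic f hm
        omega
      rw [ih h1, qCoeff_zero, pow_zero, mul_one]
      have h4 := modByMonic_add_div f φ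
      linear_combination h4

end QCoeff

section QCoeff2

variable {φ : K[X]}

lemma divByMonic_add (hm : φ.Monic) (f g : K[X]) :
    (f + g) /ₘ φ = f /ₘ φ + g /ₘ φ := by
  have h := div_modByMonic_unique (f := f + g) (g := φ) (f /ₘ φ + g /ₘ φ)
      (f %ₘ φ + g %ₘ φ) hm ?_
  · exact h.1
  constructor
  · have hf := modByMonic_add_div f φ
    have hg := modByMonic_add_div g φ
    linear_combination hf + hg
  · apply lt_of_le_of_lt (degree_add_le _ _)
    exact max_lt (degree_modByMonic_lt _ hm) (degree_modByMonic_lt _ hm)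

lemma qCoeff_add (hm : φ.Monic) (f g : K[X]) (s : ℕ) :
    qCoeff φ (f + g) s = qCoeff φ f s + qCoeff φ g s := by
  induction s generalizing f g with
  | zero => rw [qCoeff_zero, qCoeff_zero, qCoeff_zero, add_modByMonic]
  | succ s ih => rw [qCoeff_succ, qCoeff_succ, qCoeff_succ, divByMonic_add hm, ih]

lemma qCoeff_finsetSum (hm : φ.Monic) {ι : Type*} (t : Finset ι) (h : ι → K[X]) (s : ℕ) :
    qCoeff φ (∑ i ∈ t, h i) s = ∑ i ∈ t, qCoeff φ (h i) s := by
  classical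
  induction t using Finset.induction with
  | empty => simp [qCoeff_zero_left]
  | @insert a u ha ih =>
    rw [Finset.sum_insert ha, Finset.sum_insert ha, qCoeff_add hm, ih]

lemma qCoeff_mul_pow (hm : φ.Monic) {h : K[X]} (hh : h.degree < φ.degree) (k s : ℕ) :
    qCoeff φ (h * φ ^ k) s = if s = k then h else 0 := by
  induction k generalizing s with
  | zero =>
    rw [pow_zero, mul_one]
    cases s with
    | zero => rw [qCoeff_zero, (modByMonic_eq_self_iff hm).mpr hh]; simp
    | succ s =>
      rw [qCoeff_succ, (divByMonic_eq_zero_iff hm).mpr hh, qCoeff_zero_left]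
      simp
  | succ k ih =>
    have hdm : (h * φ ^ (k + 1)) /ₘ φ = h * φ ^ k ∧ (h * φ ^ (k + 1)) %ₘ φ = 0 := by
      refine div_modByMonic_unique _ _ hm ⟨by ring, ?_⟩
      rw [degree_zero]
      exact Ne.bot_lt' (Ne.symm (mt degree_eq_bot.mp hm.ne_zero))
    cases s with
    | zero =>
      rw [qCoeff_zero, hdm.2]
      simp
    | succ s =>
      rw [qCoeff_succ, hdm.1, ih s]
      simp only [Nat.succ_eq_add_one, add_left_inj]

end QCoeff2

section Trunc

variable {μ ν : K[X] → WithTop Λ} {φ : K[X]}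

lemma trunc_eq_infN (hν : IsValuation ν) (hm : φ.Monic) (hd : 0 < φ.natDegree)
    (f : K[X]) {n : ℕ} (hn : f.natDegree < n) :
    trunc ν φ f = (Finset.range n).inf (fun s => ν (qCoeff φ f s * φ ^ s)) := by
  refine le_antisymm ?_ ?_
  · refine Finset.le_inf fun s hs => ?_
    by_cases h : s ≤ f.natDegree
    · exact Finset.inf_le (Finset.mem_range.mpr (by omega))
    · rw [qCoeff_eq_zero hm hd (by omega), zero_mul, hν.zero']
      exact le_top
  · exact Finset.inf_mono (by intro s hs; simp only [Finset.mem_range] at *; omega)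

lemma trunc_le_term (hν : IsValuation ν) (hm : φ.Monic) (hd : 0 < φ.natDegree)
    (f : K[X]) (s : ℕ) : trunc ν φ f ≤ ν (qCoeff φ f s * φ ^ s) := by
  rw [trunc_eq_infN hν hm hd f (lt_of_lt_of_le (lt_add_one _) (le_max_left _ (s+1)))]
  exact Finset.inf_le (Finset.mem_range.mpr (by omega))

lemma trunc_exists_attain (f : K[X]) :
    ∃ s, ν (qCoeff φ f s * φ ^ s) = trunc ν φ f := by
  obtain ⟨s, _, hs⟩ := Finset.exists_mem_eq_inf (Finset.range (f.natDegree + 1))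
    (Finset.nonempty_range_iff.mpr (Nat.succ_ne_zero _)) (fun s => ν (qCoeff φ f s * φ ^ s))
  exact ⟨s, hs.symm⟩

lemma trunc_zero' (hν : IsValuation ν) (φ : K[X]) : trunc ν φ 0 = ⊤ := by
  simp [trunc, qCoeff_zero_left, hν.zero']

lemma trunc_of_natDegree_lt (hν : IsValuation ν) (hm : φ.Monic) (hd : 0 < φ.natDegree)
    {f : K[X]} (hf : f.natDegree < φ.natDegree) : trunc ν φ f = ν f := by
  by_cases h0 : f = 0
  · rw [h0, trunc_zero' hν, hν.zero']
  have hdeg : f.degree < φ.degree := by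
    rw [degree_eq_natDegree h0, degree_eq_natDegree hm.ne_zero]
    exact_mod_cast hf
  refine le_antisymm ?_ ?_
  · have := trunc_le_term hν hm hd f 0
    rwa [qCoeff_zero, (modByMonic_eq_self_iff hm).mpr hdeg, pow_zero, mul_one] at this
  · refine Finset.le_inf fun s _ => ?_
    cases s with
    | zero => rw [qCoeff_zero, (modByMonic_eq_self_iff hm).mpr hdeg, pow_zero, mul_one]
    | succ s =>
      rw [qCoeff_succ, (divByMonic_eq_zero_iff hm).mpr hdeg, qCoeff_zero_left, zero_mul,
        hν.zero']
      exact le_top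

lemma trunc_single (hν : IsValuation ν) (hm : φ.Monic) (hd : 0 < φ.natDegree)
    {h : K[X]} (hh : h.natDegree < φ.natDegree) (k : ℕ) :
    trunc ν φ (h * φ ^ k) = ν (h * φ ^ k) := by
  by_cases h0 : h = 0
  · rw [h0, zero_mul, trunc_zero' hν, hν.zero']
  have hdeg : h.degree < φ.degree := by
    rw [degree_eq_natDegree h0, degree_eq_natDegree hm.ne_zero]
    exact_mod_cast hh
  refine le_antisymm ?_ ?_
  · have := trunc_le_term hν hm hd (h * φ ^ k) k
    rwa [qCoeff_mul_pow hm hdeg, if_pos rfl] at this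
  · refine Finset.le_inf fun s _ => ?_
    rw [qCoeff_mul_pow hm hdeg]
    by_cases hsk : s = k
    · rw [if_pos hsk, hsk]
    · rw [if_neg hsk, zero_mul, hν.zero']
      exact le_top

lemma trunc_le_val (hν : IsValuation ν) (hm : φ.Monic) (hd : 0 < φ.natDegree) (f : K[X]) :
    trunc ν φ f ≤ ν f := by
  conv_rhs => rw [← qCoeff_expansion hm hd (lt_add_one f.natDegree)]
  exact hν.inf_le_sum _ _

lemma trunc_phi (hν : IsValuation ν) (hm : φ.Monic) (hd : 0 < φ.natDegree) :
    trunc ν φ φ = ν φ := by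
  have := trunc_single hν hm hd (h := 1) (by simpa using hd) 1
  rwa [one_mul, pow_one] at this

lemma trunc_min_le_add (hν : IsValuation ν) (hm : φ.Monic) (hd : 0 < φ.natDegree)
    (f g : K[X]) : min (trunc ν φ f) (trunc ν φ g) ≤ trunc ν φ (f + g) := by
  set n := max (max f.natDegree g.natDegree) (f + g).natDegree + 1 with hn
  have hf' : f.natDegree < n := Nat.lt_succ_of_le (le_trans (le_max_left _ _) (le_max_left _ _))
  have hg' : g.natDegree < n := Nat.lt_succ_of_le (le_trans (le_max_right _ _) (le_max_left _ _))
  have hfg' : (f + g).natDegree < n := Nat.lt_succ_of_le (le_max_right _ _)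
  rw [trunc_eq_infN hν hm hd f hf', trunc_eq_infN hν hm hd g hg',
    trunc_eq_infN hν hm hd (f + g) hfg']
  refine Finset.le_inf fun s hs => ?_
  rw [qCoeff_add hm, add_mul]
  refine le_trans ?_ (hν.min_le_add _ _)
  exact min_le_min (Finset.inf_le hs) (Finset.inf_le hs)

lemma trunc_inf_le_sum (hν : IsValuation ν) (hm : φ.Monic) (hd : 0 < φ.natDegree)
    {ι : Type*} (t : Finset ι) (h : ι → K[X]) :
    t.inf (fun i => trunc ν φ (h i)) ≤ trunc ν φ (∑ i ∈ t, h i) := by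
  classical
  induction t using Finset.induction with
  | empty => simp [trunc_zero' hν]
  | @insert a s ha ih =>
    rw [Finset.sum_insert ha, Finset.inf_insert]
    exact le_trans (min_le_min le_rfl ih) (trunc_min_le_add hν hm hd _ _)

end Trunc

section KeyLemmas

variable {μ ν : K[X] → WithTop Λ} {φ : K[X]}

/-- Two-term lemma: for a `ν`-minimal monic `φ` and `deg a < deg φ`,
`μ (q φ + a) = min (μ (q φ)) (μ a)`. -/
lemma two_term (hμ : IsValuation μ)
    (hmin : ∀ f : K[X], f ≠ 0 → f.natDegree < φ.natDegree → ¬ VDvd μ φ f)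
    (q : K[X]) {a : K[X]} (ha : a.natDegree < φ.natDegree) :
    μ (q * φ + a) = min (μ (q * φ)) (μ a) := by
  by_cases h0 : a = 0
  · rw [h0, add_zero, hμ.zero', min_eq_left le_top]
  rcases lt_trichotomy (μ (q * φ)) (μ a) with h | h | h
  · rw [hμ.add_eq_left h, min_eq_left h.le]
  · rw [min_eq_left h.le]
    rw [h]
    refine le_antisymm ?_ ?_
    · by_contra h'
      push_neg at h'
      refine hmin a h0 ha ⟨-q, ?_⟩
      have he : a - -q * φ = q * φ + a := by ring
      rw [VEquiv, he]
      exact h'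
    · have := hμ.min_le_add (q * φ) a
      rwa [h, min_self] at this
  · rw [add_comm, hμ.add_eq_left h, min_eq_right h.le]

/-- Truncation by a `μ`-minimal monic polynomial recovers `μ`. -/
lemma key_trunc_eq (hμ : IsValuation μ) (hm : φ.Monic) (hd : 0 < φ.natDegree)
    (hmin : ∀ f : K[X], f ≠ 0 → f.natDegree < φ.natDegree → ¬ VDvd μ φ f)
    (f : K[X]) : trunc μ φ f = μ f := by
  suffices H : ∀ n (f : K[X]), f.natDegree < n →
      (Finset.range n).inf (fun s => μ (qCoeff φ f s * φ ^ s)) = μ f by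
    rw [trunc_eq_infN hμ hm hd f (lt_add_one _), H _ f (lt_add_one _)]
  intro n
  induction n with
  | zero => intro f hf; omega
  | succ n ih =>
    intro f hf
    rw [inf_range_succ']
    have hterm : ∀ s ∈ Finset.range n, μ (qCoeff φ f (s + 1) * φ ^ (s + 1))
        = μ (qCoeff φ (f /ₘ φ) s * φ ^ s) + μ φ := by
      intro s _
      rw [qCoeff_succ, pow_succ, ← mul_assoc, hμ.mul']
    rw [Finset.inf_congr rfl hterm, ← inf_add_const]
    have hmod : f %ₘ φ + φ * (f /ₘ φ) = f := modByMonic_add_div f φ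
    have hr : (f %ₘ φ).natDegree < φ.natDegree := by
      have := natDegree_qCoeff hm hd f 0
      rwa [qCoeff_zero] at this
    by_cases h0 : f /ₘ φ = 0
    · have hf' : f %ₘ φ = f := by rw [h0, mul_zero, add_zero] at hmod; exact hmod
      rw [h0]
      have htop : ((Finset.range n).inf fun s => μ (qCoeff φ (0 : K[X]) s * φ ^ s)) = ⊤ := by
        refine le_antisymm le_top (Finset.le_inf fun s _ => ?_)
        rw [qCoeff_zero_left, zero_mul, hμ.zero']
      rw [htop, top_add, min_eq_left le_top, qCoeff_zero, pow_zero, mul_one, hf']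
    · have h1 : (f /ₘ φ).natDegree < n := by
        have h2 := divByMonic_ne_zero_imp hm h0
        have h3 : (f /ₘ φ).natDegree = f.natDegree - φ.natDegree := natDegree_divByMonic f hm
        omega
      rw [ih _ h1, qCoeff_zero, pow_zero, mul_one, ← hμ.mul']
      have := two_term hμ hmin (f /ₘ φ) hr
      rw [show f /ₘ φ * φ + f %ₘ φ = f by linear_combination hmod] at this
      rw [this, mul_comm]
      exact min_comm _ _

end KeyLemmas

section Structure

variable {μ ν : K[X] → WithTop Λ} {φ : K[X]}

lemma key_deg_pos (hμ : IsValuation μ) (hφ : IsMLVKey μ φ) : 0 < φ.natDegree := by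
  by_contra h
  push_neg at h
  obtain ⟨x, hx⟩ := natDegree_eq_zero.mp (Nat.le_zero.mp h)
  have hx1 : x = 1 := by
    have hmon := hφ.1
    rw [← hx] at hmon
    simpa [Polynomial.Monic, Polynomial.leadingCoeff_C] using hmon
  have hφ1 : φ = 1 := by rw [← hx, hx1, map_one]
  refine hφ.2.2.1 ⟨1, ?_⟩
  rw [VEquiv, hφ1, mul_one, sub_self, hμ.zero', hμ.one']
  exact WithTop.coe_lt_top 0

lemma const_eq (hμ : IsValuation μ) (hν : IsValuation ν) (hle : ValLE μ ν) (x : K) :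
    μ (C x) = ν (C x) := by
  by_cases hx : x = 0
  · rw [hx, map_zero, hμ.zero', hν.zero']
  have hxinv : x⁻¹ ≠ 0 := inv_ne_zero hx
  have hμ0 : μ (C x) + μ (C x⁻¹) = 0 := by
    rw [← hμ.mul', ← map_mul, mul_inv_cancel₀ hx, map_one, hμ.one']
  have hν0 : ν (C x) + ν (C x⁻¹) = 0 := by
    rw [← hν.mul', ← map_mul, mul_inv_cancel₀ hx, map_one, hν.one']
  have h3' := hle (C x)
  have h4' := hle (C x⁻¹)
  lift μ (C x) to Λ using hμ.C_ne_top hx with a hA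
  lift μ (C x⁻¹) to Λ using hμ.C_ne_top hxinv with b hB
  lift ν (C x) to Λ using hν.C_ne_top hx with c hC
  lift ν (C x⁻¹) to Λ using hν.C_ne_top hxinv with d hD
  have h1 : a + b = 0 := by exact_mod_cast hμ0
  have h2 : c + d = 0 := by exact_mod_cast hν0
  have h3 : a ≤ c := by exact_mod_cast h3'
  have h4 : b ≤ d := by exact_mod_cast h4'
  rw [WithTop.coe_inj]
  have hab : a = -b := eq_neg_of_add_eq_zero_left h1
  have hcd : c = -d := eq_neg_of_add_eq_zero_left h2
  refine le_antisymm h3 ?_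
  rw [hab, hcd]
  exact neg_le_neg h4

/-- If `μ < ν` then `μ` has trivial support. -/
lemma supp_zero (hμ : IsValuation μ) (hν : IsValuation ν) (hlt : ValLT μ ν) :
    ∀ f : K[X], f ≠ 0 → μ f ≠ ⊤ := by
  classical
  by_contra hcon
  push_neg at hcon
  obtain ⟨f₀, hf₀, hft⟩ := hcon
  let P : ℕ → Prop := fun n => ∃ g : K[X], g ≠ 0 ∧ μ g = ⊤ ∧ g.natDegree = n
  have hP : ∃ n, P n := ⟨f₀.natDegree, f₀, hf₀, hft, rfl⟩
  obtain ⟨g, hg0, hgt, hgdeg⟩ := Nat.find_spec hP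
  set n₀ := Nat.find hP with hn₀def
  have hminimal : ∀ r : K[X], r ≠ 0 → r.natDegree < n₀ → μ r ≠ ⊤ := by
    intro r hr hrd ht
    exact Nat.find_min hP hrd ⟨r, hr, ht, rfl⟩
  have hn₀ : 0 < n₀ := by
    rcases Nat.eq_zero_or_pos n₀ with h | h
    · exfalso
      rw [h] at hgdeg
      obtain ⟨x, hx⟩ := natDegree_eq_zero.mp hgdeg
      have hx0 : x ≠ 0 := by rintro rfl; rw [map_zero] at hx; exact hg0 hx.symm
      exact hμ.C_ne_top hx0 (hx ▸ hgt)
    · exact h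
  set p := g * C (g.leadingCoeff)⁻¹ with hp
  have hlc : (g.leadingCoeff)⁻¹ ≠ 0 := inv_ne_zero (leadingCoeff_ne_zero.mpr hg0)
  have hpm : p.Monic := monic_mul_leadingCoeff_inv hg0
  have hpt : μ p = ⊤ := by rw [hp, hμ.mul', hgt, top_add]
  have hνpt : ν p = ⊤ := top_le_iff.mp (hpt ▸ hlt.1 p)
  have hpdeg : p.natDegree = n₀ := by
    rw [hp, natDegree_mul hg0 (fun h => hlc (C_eq_zero.mp h)), natDegree_C, add_zero, hgdeg]
  have hirr : Irreducible p := by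
    constructor
    · exact not_isUnit_of_natDegree_pos p (hpdeg ▸ hn₀)
    · intro a b hab
      have ha0 : a ≠ 0 := fun h => hpm.ne_zero (by rw [hab, h, zero_mul])
      have hb0 : b ≠ 0 := fun h => hpm.ne_zero (by rw [hab, h, mul_zero])
      have htop : μ a = ⊤ ∨ μ b = ⊤ := by
        rw [hab, hμ.mul'] at hpt
        exact WithTop.add_eq_top.mp hpt
      have hdeg : a.natDegree + b.natDegree = n₀ := by
        rw [← hpdeg, hab, natDegree_mul ha0 hb0]
      have hunit : ∀ h : K[X], h ≠ 0 → h.natDegree = 0 → IsUnit h := by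
        intro h hh0 hhd
        obtain ⟨x, hx⟩ := natDegree_eq_zero.mp hhd
        have : x ≠ 0 := fun h0 => hh0 (by rw [← hx, h0, map_zero])
        exact hx ▸ isUnit_C.mpr this.isUnit
      rcases htop with h | h
      · have : ¬ a.natDegree < n₀ := fun hlt' => hminimal a ha0 hlt' h
        exact Or.inr (hunit b hb0 (by omega))
      · have : ¬ b.natDegree < n₀ := fun hlt' => hminimal b hb0 hlt' h
        exact Or.inl (hunit a ha0 (by omega))
  have hA : ∀ r : K[X], r ≠ 0 → r.natDegree < n₀ → μ r = ν r ∧ ν r ≠ ⊤ := by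
    intro r hr0 hrd
    have hndvd : ¬ p ∣ r := fun hdvd => by
      have := natDegree_le_of_dvd hdvd hr0
      omega
    obtain ⟨u, v, huv⟩ := (hirr.coprime_iff_not_dvd).mpr hndvd
    have h1 : v * r = 1 + -(u * p) := by linear_combination huv
    have hμu : μ (-(u * p)) = ⊤ := by rw [hμ.neg', hμ.mul', hpt, add_top]
    have hνu : ν (-(u * p)) = ⊤ := by rw [hν.neg', hν.mul', hνpt, add_top]
    have hμvr : μ v + μ r = 0 := by
      rw [← hμ.mul', h1, hμ.add_eq_left (by rw [hμu, hμ.one']; exact WithTop.coe_lt_top 0),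
        hμ.one']
    have hνvr : ν v + ν r = 0 := by
      rw [← hν.mul', h1, hν.add_eq_left (by rw [hνu, hν.one']; exact WithTop.coe_lt_top 0),
        hν.one']
    have hμvt : μ v ≠ ⊤ := by intro h; rw [h, top_add] at hμvr; exact WithTop.top_ne_zero hμvr
    have hμrt : μ r ≠ ⊤ := by intro h; rw [h, add_top] at hμvr; exact WithTop.top_ne_zero hμvr
    have hνvt : ν v ≠ ⊤ := by intro h; rw [h, top_add] at hνvr; exact WithTop.top_ne_zero hνvr
    have hνrt : ν r ≠ ⊤ := by intro h; rw [h, add_top] at hνvr; exact WithTop.top_ne_zero hνvr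
    refine ⟨?_, hνrt⟩
    have h4' := hlt.1 v
    have h5' := hlt.1 r
    lift μ v to Λ using hμvt with a hA'
    lift μ r to Λ using hμrt with b hB'
    lift ν v to Λ using hνvt with c hC'
    lift ν r to Λ using hνrt with d hD'
    have h2 : a + b = 0 := by exact_mod_cast hμvr
    have h3 : c + d = 0 := by exact_mod_cast hνvr
    have h4 : a ≤ c := by exact_mod_cast h4'
    have h5 : b ≤ d := by exact_mod_cast h5'
    rw [WithTop.coe_inj]
    have hba : b = -a := eq_neg_of_add_eq_zero_right h2
    have hdc : d = -c := eq_neg_of_add_eq_zero_right h3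
    refine le_antisymm h5 ?_
    rw [hba, hdc]
    exact neg_le_neg h4
  refine hlt.2 (funext fun h => ?_)
  by_cases hht : μ h = ⊤
  · rw [hht]
    exact (top_le_iff.mp (hht ▸ hlt.1 h)).symm
  set r := h %ₘ p with hr
  have hmod : r + p * (h /ₘ p) = h := modByMonic_add_div h p
  have htopμ : μ (p * (h /ₘ p)) = ⊤ := by rw [hμ.mul', hpt, top_add]
  have htopν : ν (p * (h /ₘ p)) = ⊤ := by rw [hν.mul', hνpt, top_add]
  have hr0 : r ≠ 0 := by
    intro h0
    rw [h0, zero_add] at hmod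
    exact hht (hmod ▸ htopμ)
  have hrd : r.natDegree < n₀ := by
    rw [← hpdeg]
    exact natDegree_lt_natDegree hr0 (degree_modByMonic_lt h hpm)
  obtain ⟨hreq, hrfin⟩ := hA r hr0 hrd
  have hμhr : μ h = μ r := by
    rw [← hmod, hμ.add_eq_left]
    rw [htopμ]
    exact lt_top_iff_ne_top.mpr (hminimal r hr0 hrd)
  have hνhr : ν h = ν r := by
    rw [← hmod, hν.add_eq_left]
    rw [htopν]
    exact lt_top_iff_ne_top.mpr hrfin
  rw [hμhr, hνhr, hreq]

/-- Below the minimal degree of `Φ(μ,ν)`, the two valuations agree. -/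
lemma low_deg_eq (hμ : IsValuation μ) (hν : IsValuation ν) (hle : ValLE μ ν) {m : ℕ}
    (hmin : ∀ ψ : K[X], ψ.Monic → μ ψ < ν ψ → m ≤ ψ.natDegree) :
    ∀ f : K[X], f.natDegree < m → μ f = ν f := by
  intro f hf
  by_cases hf0 : f = 0
  · rw [hf0, hμ.zero', hν.zero']
  by_contra hne
  have hlt' : μ f < ν f := lt_of_le_of_ne (hle f) hne
  set c := (f.leadingCoeff)⁻¹ with hc
  have hc0 : c ≠ 0 := inv_ne_zero (leadingCoeff_ne_zero.mpr hf0)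
  set f₀ := f * C c with hf₀
  have hf0m : f₀.Monic := monic_mul_leadingCoeff_inv hf0
  have hd₀ : f₀.natDegree = f.natDegree := by
    rw [hf₀, natDegree_mul hf0 (fun h => hc0 (C_eq_zero.mp h)), natDegree_C, add_zero]
  have hlt₀ : μ f₀ < ν f₀ := by
    rw [hf₀, hμ.mul', hν.mul', const_eq hμ hν hle c]
    exact wt_add_lt_add hlt' le_rfl (hν.C_ne_top hc0)
  have := hmin f₀ hf0m hlt₀
  omega

/-- Lemma on products of small-degree polynomials for an MLV key polynomial. -/
lemma key_mul_mod (hμ : IsValuation μ) (hm : φ.Monic) (hd : 0 < φ.natDegree)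
    (hmin : ∀ f : K[X], f ≠ 0 → f.natDegree < φ.natDegree → ¬ VDvd μ φ f)
    (hirr : ∀ f g : K[X], VDvd μ φ (f * g) → VDvd μ φ f ∨ VDvd μ φ g)
    {a b : K[X]} (ha : a.natDegree < φ.natDegree) (hb : b.natDegree < φ.natDegree) :
    μ ((a * b) %ₘ φ) = μ a + μ b ∧ μ a + μ b ≤ μ ((a * b) /ₘ φ) + μ φ := by
  by_cases ha0 : a = 0
  · rw [ha0, zero_mul, zero_modByMonic, zero_divByMonic, hμ.zero', top_add, top_add]
    exact ⟨rfl, le_refl _⟩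
  by_cases hb0 : b = 0
  · rw [hb0, mul_zero, zero_modByMonic, zero_divByMonic, hμ.zero', add_top, top_add]
    exact ⟨rfl, le_refl _⟩
  set c := (a * b) /ₘ φ with hcdef
  set r := (a * b) %ₘ φ with hrdef
  have hmod : r + φ * c = a * b := modByMonic_add_div _ φ
  have hrd : r.natDegree < φ.natDegree := by
    by_cases h : r = 0
    · rw [h]; simpa using hd
    · exact natDegree_lt_natDegree h (degree_modByMonic_lt _ hm)
  have h2 := two_term hμ hmin c hrd
  rw [show c * φ + r = a * b by linear_combination hmod] at h2
  have hler : μ r ≤ μ (c * φ) := by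
    by_contra h'
    push_neg at h'
    have hdvd : VDvd μ φ (a * b) := by
      refine ⟨c, ?_⟩
      rw [VEquiv, show a * b - c * φ = r by linear_combination -hmod, h2, min_eq_left h'.le]
      exact h'
    rcases hirr a b hdvd with h | h
    · exact hmin a ha0 ha h
    · exact hmin b hb0 hb h
  constructor
  · rw [← hμ.mul', h2, min_eq_right hler]
  · calc μ a + μ b = μ (a * b) := (hμ.mul' a b).symm
      _ = min (μ (c * φ)) (μ r) := h2
      _ ≤ μ (c * φ) := min_le_left _ _
      _ = μ c + μ φ := hμ.mul' c φ

end Structure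

section MainMul

variable {μ ν : K[X] → WithTop Λ} {φ : K[X]}

lemma IsValuation.pow_ne_top (hν : IsValuation ν) {φ : K[X]} (h : ν φ ≠ ⊤) (s : ℕ) :
    ν (φ ^ s) ≠ ⊤ := by
  induction s with
  | zero => rw [pow_zero, hν.one']; exact WithTop.zero_ne_top
  | succ s ih => rw [pow_succ, hν.mul']; exact WithTop.add_ne_top.mpr ⟨ih, h⟩

lemma ne_top_of_pow_ne_top (hν : IsValuation ν) {φ : K[X]} {s : ℕ} (hs : 0 < s)
    (h : ν (φ ^ s) ≠ ⊤) : ν φ ≠ ⊤ := by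
  intro ht
  obtain ⟨k, rfl⟩ : ∃ k, s = k + 1 := ⟨s - 1, by omega⟩
  rw [pow_succ, hν.mul', ht, add_top] at h
  exact h rfl

lemma degree_lt_of_natDegree_lt {a φ : K[X]} (hφ0 : φ ≠ 0) (h : a.natDegree < φ.natDegree) :
    a.degree < φ.degree := by
  by_cases ha : a = 0
  · rw [ha, degree_zero]
    exact Ne.bot_lt' (Ne.symm (mt degree_eq_bot.mp hφ0))
  · rw [degree_eq_natDegree ha, degree_eq_natDegree hφ0]
    exact_mod_cast h

/-- If the truncation of `f` is `⊤` (and `f ≠ 0`), the truncation of any multiple is `⊤`. -/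
lemma trunc_top_mul (hν : IsValuation ν) (hm : φ.Monic) (hd : 0 < φ.natDegree)
    (hfin : ∀ a : K[X], a ≠ 0 → a.natDegree < φ.natDegree → ν a ≠ ⊤)
    {f : K[X]} (hf0 : f ≠ 0) (hWf : trunc ν φ f = ⊤) (g : K[X]) :
    trunc ν φ (f * g) = ⊤ := by
  have hterms : ∀ s, ν (qCoeff φ f s * φ ^ s) = ⊤ :=
    fun s => top_le_iff.mp (hWf ▸ trunc_le_term hν hm hd f s)
  have hA0 : qCoeff φ f 0 = 0 := by
    by_contra h
    have h2 := hterms 0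
    rw [pow_zero, mul_one] at h2
    exact hfin _ h (natDegree_qCoeff hm hd f 0) h2
  have hex : ∃ s, qCoeff φ f s ≠ 0 := by
    by_contra h
    push_neg at h
    refine hf0 ?_
    have h2 := qCoeff_expansion hm hd (f := f) (lt_add_one f.natDegree)
    rw [← h2]
    exact Finset.sum_eq_zero fun s _ => by rw [h s, zero_mul]
  obtain ⟨s, hs⟩ := hex
  have hs1 : 0 < s := by
    rcases Nat.eq_zero_or_pos s with h | h
    · exact absurd (h ▸ hs) (by rw [hA0]; simp)
    · exact h
  have hφtop : ν φ = ⊤ := by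
    by_contra hφt
    have h2 := hterms s
    rw [hν.mul'] at h2
    rcases WithTop.add_eq_top.mp h2 with h | h
    · exact hfin _ hs (natDegree_qCoeff hm hd f s) h
    · exact hν.pow_ne_top hφt s h
  have hdvd : φ ∣ f := (modByMonic_eq_zero_iff_dvd hm).mp (by rw [← qCoeff_zero]; exact hA0)
  refine le_antisymm le_top (Finset.le_inf fun u _ => ?_)
  cases u with
  | zero =>
    have h3 : qCoeff φ (f * g) 0 = 0 := by
      rw [qCoeff_zero]
      exact (modByMonic_eq_zero_iff_dvd hm).mpr (hdvd.mul_right g)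
    rw [h3, zero_mul, hν.zero']
  | succ u =>
    rw [hν.mul', pow_succ, hν.mul', hφtop, add_top, add_top]

/-- Multiplicativity of the truncation when `φ ∈ Φ(μ,ν)` is an MLV key polynomial of `μ`. -/
lemma trunc_mul_main (hμ : IsValuation μ) (hν : IsValuation ν) (hlt : ValLT μ ν)
    (hφ : IsMLVKey μ φ) (hin : φ ∈ PhiSet μ ν) (f g : K[X]) :
    trunc ν φ (f * g) = trunc ν φ f + trunc ν φ g := by
  classical
  have hm : φ.Monic := hφ.1
  have hd : 0 < φ.natDegree := key_deg_pos hμ hφ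
  have hmin := hφ.2.1
  have hirr := hφ.2.2.2
  have hγ : μ φ < ν φ := hin.2.1
  have hμφt : μ φ ≠ ⊤ := fun h => not_top_lt (h ▸ hγ)
  have loweq : ∀ a : K[X], a.natDegree < φ.natDegree → μ a = ν a :=
    low_deg_eq hμ hν hlt.1 hin.2.2
  have hsupp : ∀ a : K[X], a ≠ 0 → μ a ≠ ⊤ := supp_zero hμ hν hlt
  have hfin : ∀ a : K[X], a ≠ 0 → a.natDegree < φ.natDegree → ν a ≠ ⊤ := by
    intro a h1 h2
    rw [← loweq a h2]
    exact hsupp a h1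
  by_cases hf0 : f = 0
  · rw [hf0, zero_mul, trunc_zero' hν, top_add]
  by_cases hg0 : g = 0
  · rw [hg0, mul_zero, trunc_zero' hν, add_top]
  by_cases hWf : trunc ν φ f = ⊤
  · rw [trunc_top_mul hν hm hd hfin hf0 hWf g, hWf, top_add]
  by_cases hWg : trunc ν φ g = ⊤
  · rw [mul_comm, trunc_top_mul hν hm hd hfin hg0 hWg f, hWg, add_top]
  -- main case
  set A : ℕ → K[X] := fun s => qCoeff φ f s with hAdef
  set B : ℕ → K[X] := fun t => qCoeff φ g t with hBdef
  have hSf : ∃ s, ν (A s * φ ^ s) = trunc ν φ f := trunc_exists_attain f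
  have hSg : ∃ t, ν (B t * φ ^ t) = trunc ν φ g := trunc_exists_attain g
  set s₀ := Nat.find hSf with hs₀def
  set t₀ := Nat.find hSg with ht₀def
  have hs₀ : ν (A s₀ * φ ^ s₀) = trunc ν φ f := Nat.find_spec hSf
  have ht₀ : ν (B t₀ * φ ^ t₀) = trunc ν φ g := Nat.find_spec hSg
  have hs₀min : ∀ s < s₀, trunc ν φ f < ν (A s * φ ^ s) := fun s hs =>
    lt_of_le_of_ne (trunc_le_term hν hm hd f s) (fun h => Nat.find_min hSf hs h.symm)
  have ht₀min : ∀ t < t₀, trunc ν φ g < ν (B t * φ ^ t) := fun t ht =>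
    lt_of_le_of_ne (trunc_le_term hν hm hd g t) (fun h => Nat.find_min hSg ht h.symm)
  have hA0 : A s₀ ≠ 0 := by
    intro h
    rw [h, zero_mul, hν.zero'] at hs₀
    exact hWf hs₀.symm
  have hB0 : B t₀ ≠ 0 := by
    intro h
    rw [h, zero_mul, hν.zero'] at ht₀
    exact hWg ht₀.symm
  have hAfin : ν (A s₀) ≠ ⊤ := hfin _ hA0 (natDegree_qCoeff hm hd f s₀)
  have hBfin : ν (B t₀) ≠ ⊤ := hfin _ hB0 (natDegree_qCoeff hm hd g t₀)
  have hφs₀fin : ν (φ ^ s₀) ≠ ⊤ := by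
    intro h
    rw [hν.mul', h, add_top] at hs₀
    exact hWf hs₀.symm
  have hφt₀fin : ν (φ ^ t₀) ≠ ⊤ := by
    intro h
    rw [hν.mul', h, add_top] at ht₀
    exact hWg ht₀.symm
  have hφu₀fin : ν (φ ^ (s₀ + t₀)) ≠ ⊤ := by
    rw [pow_add, hν.mul']
    exact WithTop.add_ne_top.mpr ⟨hφs₀fin, hφt₀fin⟩
  have hv₀fin : ν (A s₀) + ν (B t₀) ≠ ⊤ := WithTop.add_ne_top.mpr ⟨hAfin, hBfin⟩
  have hsum : trunc ν φ f + trunc ν φ g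
      = (ν (A s₀) + ν (B t₀)) + ν (φ ^ (s₀ + t₀)) := by
    rw [← hs₀, ← ht₀, hν.mul', hν.mul', pow_add, hν.mul']
    exact add_add_add_comm _ _ _ _
  -- expansion of the product
  set P := (Finset.range (f.natDegree + 1)) ×ˢ (Finset.range (g.natDegree + 1)) with hPdef
  have hfg : f * g = ∑ p ∈ P, (A p.1 * B p.2) * φ ^ (p.1 + p.2) := by
    conv_lhs => rw [← qCoeff_expansion hm hd (lt_add_one f.natDegree),
      ← qCoeff_expansion hm hd (lt_add_one g.natDegree)]
    rw [Finset.sum_mul_sum, hPdef, Finset.sum_product]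
    refine Finset.sum_congr rfl fun s _ => Finset.sum_congr rfl fun t _ => ?_
    rw [pow_add]; ring
  set r : ℕ × ℕ → K[X] := fun p => (A p.1 * B p.2) %ₘ φ with hrdef
  set c : ℕ × ℕ → K[X] := fun p => (A p.1 * B p.2) /ₘ φ with hcdef
  have hmodp : ∀ p : ℕ × ℕ, r p + φ * c p = A p.1 * B p.2 := fun p => modByMonic_add_div _ φ
  have hrdeg : ∀ p, (r p).degree < φ.degree := fun p => degree_modByMonic_lt _ hm
  have hrnat : ∀ p : ℕ × ℕ, (r p).natDegree < φ.natDegree := by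
    intro p
    by_cases h : r p = 0
    · rw [h]; simpa using hd
    · exact natDegree_lt_natDegree h (hrdeg p)
  have hczero : ∀ p : ℕ × ℕ, A p.1 * B p.2 = 0 → c p = 0 := by
    intro p h
    rw [hcdef]; simp only [h, zero_divByMonic]
  have hrzero : ∀ p : ℕ × ℕ, A p.1 * B p.2 = 0 → r p = 0 := by
    intro p h
    rw [hrdef]; simp only [h, zero_modByMonic]
  have hcnat : ∀ p : ℕ × ℕ, (c p).natDegree < φ.natDegree := by
    intro p
    by_cases h : A p.1 * B p.2 = 0
    · rw [hczero p h]; simpa using hd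
    · obtain ⟨h1, h2⟩ := mul_ne_zero_iff.mp h
      have e1 : (c p).natDegree = (A p.1 * B p.2).natDegree - φ.natDegree :=
        natDegree_divByMonic _ hm
      have e2 : (A p.1 * B p.2).natDegree = (A p.1).natDegree + (B p.2).natDegree :=
        natDegree_mul h1 h2
      have e3 : (A p.1).natDegree < φ.natDegree := natDegree_qCoeff hm hd f p.1
      have e4 : (B p.2).natDegree < φ.natDegree := natDegree_qCoeff hm hd g p.2
      omega
  have hcdeg : ∀ p, (c p).degree < φ.degree :=
    fun p => degree_lt_of_natDegree_lt hm.ne_zero (hcnat p)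
  have hsplit : ∀ p : ℕ × ℕ, (A p.1 * B p.2) * φ ^ (p.1 + p.2)
      = r p * φ ^ (p.1 + p.2) + c p * φ ^ (p.1 + p.2 + 1) := by
    intro p
    rw [← hmodp p, pow_succ]; ring
  have hrval : ∀ p : ℕ × ℕ, A p.1 ≠ 0 → B p.2 ≠ 0 →
      ν (r p) = ν (A p.1) + ν (B p.2) := by
    intro p h1 h2
    have hk := key_mul_mod hμ hm hd hmin hirr
      (natDegree_qCoeff hm hd f p.1) (natDegree_qCoeff hm hd g p.2)
    calc ν (r p) = μ (r p) := (loweq _ (hrnat p)).symm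
      _ = μ (A p.1) + μ (B p.2) := hk.1
      _ = ν (A p.1) + ν (B p.2) := by
          rw [loweq _ (natDegree_qCoeff hm hd f p.1), loweq _ (natDegree_qCoeff hm hd g p.2)]
  have hcval : ∀ p : ℕ × ℕ, A p.1 ≠ 0 → B p.2 ≠ 0 →
      ν (A p.1) + ν (B p.2) ≤ ν (c p) + μ φ := by
    intro p h1 h2
    have hk := key_mul_mod hμ hm hd hmin hirr
      (natDegree_qCoeff hm hd f p.1) (natDegree_qCoeff hm hd g p.2)
    have := hk.2
    rwa [loweq _ (natDegree_qCoeff hm hd f p.1), loweq _ (natDegree_qCoeff hm hd g p.2),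
      loweq _ (hcnat p)] at this
  -- the canonical coefficient of f*g at s₀ + t₀
  have hEcoeff : qCoeff φ (f * g) (s₀ + t₀) = ∑ p ∈ P,
      ((if s₀ + t₀ = p.1 + p.2 then r p else 0)
        + (if s₀ + t₀ = p.1 + p.2 + 1 then c p else 0)) := by
    rw [hfg, qCoeff_finsetSum hm]
    refine Finset.sum_congr rfl fun p _ => ?_
    rw [hsplit p, qCoeff_add hm, qCoeff_mul_pow hm (hrdeg p), qCoeff_mul_pow hm (hcdeg p)]
  have hs₀le : s₀ ≤ f.natDegree := by
    by_contra hc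
    exact hA0 (qCoeff_eq_zero hm hd (by omega))
  have ht₀le : t₀ ≤ g.natDegree := by
    by_contra hc
    exact hB0 (qCoeff_eq_zero hm hd (by omega))
  have hi₀P : (s₀, t₀) ∈ P := by
    rw [hPdef, Finset.mem_product]
    exact ⟨Finset.mem_range.mpr (by omega), Finset.mem_range.mpr (by omega)⟩
  have hEval : ν (qCoeff φ (f * g) (s₀ + t₀)) = ν (A s₀) + ν (B t₀) := by
    rw [hEcoeff]
    refine hν.sum_eq_of_dominant hi₀P ?_ hv₀fin ?_
    · rw [if_pos rfl, if_neg (by omega), add_zero]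
      exact hrval (s₀, t₀) hA0 hB0
    · intro p hp hne
      by_cases h1 : s₀ + t₀ = p.1 + p.2
      · rw [if_pos h1, if_neg (by omega), add_zero]
        by_cases hA' : A p.1 = 0
        · rw [hrzero p (by rw [hA', zero_mul]), hν.zero']
          exact lt_top_iff_ne_top.mpr hv₀fin
        by_cases hB' : B p.2 = 0
        · rw [hrzero p (by rw [hB', mul_zero]), hν.zero']
          exact lt_top_iff_ne_top.mpr hv₀fin
        rw [hrval p hA' hB']
        have hps : ¬(p.1 = s₀ ∧ p.2 = t₀) := fun h => hne (Prod.ext h.1 h.2)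
        have hcase : p.1 < s₀ ∨ p.2 < t₀ := by omega
        have hkey : (ν (A s₀) + ν (B t₀)) + ν (φ ^ (s₀ + t₀))
            < (ν (A p.1) + ν (B p.2)) + ν (φ ^ (s₀ + t₀)) := by
          have hre : (ν (A p.1) + ν (B p.2)) + ν (φ ^ (s₀ + t₀))
              = ν (A p.1 * φ ^ p.1) + ν (B p.2 * φ ^ p.2) := by
            rw [h1, hν.mul', hν.mul', pow_add, hν.mul']
            exact (add_add_add_comm _ _ _ _).symm
          rw [← hsum, hre]
          rcases hcase with h | h
          · exact wt_add_lt_add (hs₀min _ h) (trunc_le_term hν hm hd g p.2) hWg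
          · rw [add_comm (trunc ν φ f) _, add_comm (ν (A p.1 * φ ^ p.1)) _]
            exact wt_add_lt_add (ht₀min _ h) (trunc_le_term hν hm hd f p.1) hWf
        exact (WithTop.add_lt_add_iff_right hφu₀fin).mp hkey
      · by_cases h2 : s₀ + t₀ = p.1 + p.2 + 1
        · rw [if_neg h1, if_pos h2, zero_add]
          by_cases hA' : A p.1 = 0
          · rw [hczero p (by rw [hA', zero_mul]), hν.zero']
            exact lt_top_iff_ne_top.mpr hv₀fin
          by_cases hB' : B p.2 = 0
          · rw [hczero p (by rw [hB', mul_zero]), hν.zero']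
            exact lt_top_iff_ne_top.mpr hv₀fin
          have hu₀pos : 0 < s₀ + t₀ := by omega
          have hφfin : ν φ ≠ ⊤ := ne_top_of_pow_ne_top hν hu₀pos hφu₀fin
          have hφpfin : ν (φ ^ (p.1 + p.2)) ≠ ⊤ := hν.pow_ne_top hφfin _
          have hge : ((ν (A s₀) + ν (B t₀)) + ν φ) + ν (φ ^ (p.1 + p.2))
              ≤ (ν (A p.1) + ν (B p.2)) + ν (φ ^ (p.1 + p.2)) := by
            have h3 : trunc ν φ f + trunc ν φ g
                ≤ ν (A p.1 * φ ^ p.1) + ν (B p.2 * φ ^ p.2) :=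
              add_le_add (trunc_le_term hν hm hd f p.1) (trunc_le_term hν hm hd g p.2)
            rw [hsum, h2] at h3
            calc ((ν (A s₀) + ν (B t₀)) + ν φ) + ν (φ ^ (p.1 + p.2))
                = (ν (A s₀) + ν (B t₀)) + ν (φ ^ (p.1 + p.2 + 1)) := by
                  rw [pow_succ, hν.mul', add_assoc,
                    add_comm (ν φ) (ν (φ ^ (p.1 + p.2)))]
              _ ≤ ν (A p.1 * φ ^ p.1) + ν (B p.2 * φ ^ p.2) := h3
              _ = (ν (A p.1) + ν (B p.2)) + ν (φ ^ (p.1 + p.2)) := by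
                  rw [hν.mul', hν.mul', pow_add, hν.mul']
                  exact add_add_add_comm _ _ _ _
          have hge2 : (ν (A s₀) + ν (B t₀)) + ν φ ≤ ν (A p.1) + ν (B p.2) :=
            (WithTop.add_le_add_iff_right hφpfin).mp hge
          have hc1 : (ν (A s₀) + ν (B t₀)) + ν φ ≤ ν (c p) + μ φ :=
            le_trans hge2 (hcval p hA' hB')
          have hc2 : (ν (A s₀) + ν (B t₀)) + μ φ < (ν (A s₀) + ν (B t₀)) + ν φ :=
            (WithTop.add_lt_add_iff_left hv₀fin).mpr hγ
          have hc3 : (ν (A s₀) + ν (B t₀)) + μ φ < ν (c p) + μ φ :=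
            lt_of_lt_of_le hc2 hc1
          exact (WithTop.add_lt_add_iff_right hμφt).mp hc3
        · rw [if_neg h1, if_neg h2, add_zero, hν.zero']
          exact lt_top_iff_ne_top.mpr hv₀fin
  -- upper bound
  have hle2 : trunc ν φ (f * g) ≤ trunc ν φ f + trunc ν φ g := by
    have h4 := trunc_le_term hν hm hd (f * g) (s₀ + t₀)
    rwa [hν.mul', hEval, ← hsum] at h4
  -- lower bound
  have hge1 : trunc ν φ f + trunc ν φ g ≤ trunc ν φ (f * g) := by
    conv_rhs => rw [hfg]
    refine le_trans ?_ (trunc_inf_le_sum hν hm hd P _)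
    refine Finset.le_inf fun p hp => ?_
    rw [hsplit p]
    refine le_trans ?_ (trunc_min_le_add hν hm hd _ _)
    rw [trunc_single hν hm hd (hrnat p) _, trunc_single hν hm hd (hcnat p) _]
    by_cases hA' : A p.1 = 0
    · rw [hrzero p (by rw [hA', zero_mul]), hczero p (by rw [hA', zero_mul]), zero_mul,
        zero_mul, hν.zero', min_self]
      exact le_top
    by_cases hB' : B p.2 = 0
    · rw [hrzero p (by rw [hB', mul_zero]), hczero p (by rw [hB', mul_zero]), zero_mul,
        zero_mul, hν.zero', min_self]
      exact le_top
    have hbase : trunc ν φ f + trunc ν φ g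
        ≤ (ν (A p.1) + ν (B p.2)) + ν (φ ^ (p.1 + p.2)) := by
      calc trunc ν φ f + trunc ν φ g
          ≤ ν (A p.1 * φ ^ p.1) + ν (B p.2 * φ ^ p.2) :=
            add_le_add (trunc_le_term hν hm hd f p.1) (trunc_le_term hν hm hd g p.2)
        _ = (ν (A p.1) + ν (B p.2)) + ν (φ ^ (p.1 + p.2)) := by
            rw [hν.mul', hν.mul', pow_add, hν.mul']
            exact add_add_add_comm _ _ _ _
    refine le_min ?_ ?_
    · rw [hν.mul', hrval p hA' hB']
      exact hbase
    · rw [hν.mul', pow_succ, hν.mul']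
      calc trunc ν φ f + trunc ν φ g
          ≤ (ν (A p.1) + ν (B p.2)) + ν (φ ^ (p.1 + p.2)) := hbase
        _ ≤ (ν (c p) + μ φ) + ν (φ ^ (p.1 + p.2)) :=
            add_le_add_left (hcval p hA' hB') _
        _ ≤ (ν (c p) + ν φ) + ν (φ ^ (p.1 + p.2)) :=
            add_le_add_left (add_le_add_right hγ.le _) _
        _ = ν (c p) + (ν (φ ^ (p.1 + p.2)) + ν φ) := by
            rw [add_assoc, add_comm (ν φ) _]
  exact le_antisymm hle2 hge1

end MainMul

section Parts

variable {μ ν : K[X] → WithTop Λ} {φ : K[X]}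

lemma monic_natDegree_zero_eq_one {p : K[X]} (hm : p.Monic) (h : p.natDegree = 0) :
    p = 1 := by
  obtain ⟨x, hx⟩ := natDegree_eq_zero.mp h
  have hx1 : x = 1 := by
    rw [← hx] at hm
    simpa [Polynomial.Monic, Polynomial.leadingCoeff_C] using hm
  rw [← hx, hx1, map_one]

/-- Part (1) of Statement 5. -/
lemma part1 (hμ : IsValuation μ) (hν : IsValuation ν) (hlt : ValLT μ ν)
    (hφ : IsMLVKey μ φ) (hin : φ ∈ PhiSet μ ν) :
    IsValuation (trunc ν φ) ∧ trunc ν φ = augVal μ φ (ν φ) ∧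
      ValLT μ (trunc ν φ) ∧ ValLE (trunc ν φ) ν := by
  have hm : φ.Monic := hφ.1
  have hd : 0 < φ.natDegree := key_deg_pos hμ hφ
  have hmin := hφ.2.1
  have hγ : μ φ < ν φ := hin.2.1
  have loweq : ∀ a : K[X], a.natDegree < φ.natDegree → μ a = ν a :=
    low_deg_eq hμ hν hlt.1 hin.2.2
  refine ⟨⟨trunc_zero' hν φ, trunc_mul_main hμ hν hlt hφ hin, trunc_min_le_add hν hm hd,
      fun a ha => ?_⟩, ?_, ⟨fun f => ?_, ?_⟩, fun f => trunc_le_val hν hm hd f⟩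
  · rw [trunc_of_natDegree_lt hν hm hd (by rw [natDegree_C]; exact hd)]
    exact hν.C_ne_top ha
  · funext f
    refine Finset.inf_congr rfl fun s _ => ?_
    rw [hν.mul', hν.pow', loweq _ (natDegree_qCoeff hm hd f s)]
  · rw [← key_trunc_eq hμ hm hd hmin f]
    simp only [trunc]
    exact Finset.inf_mono_fun fun s _ => hlt.1 _
  · intro heq
    have h1 : μ φ = trunc ν φ φ := congrFun heq φ
    rw [trunc_phi hν hm hd] at h1
    exact hγ.ne h1

/-- Part (2) of Statement 5. -/
lemma part2 (hμ : IsValuation μ) (hν : IsValuation ν) (hlt : ValLT μ ν)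
    (hφ : IsMLVKey μ φ) (hnot : φ ∉ PhiSet μ ν)
    (hex : ∃ ψ ∈ PhiSet μ ν, φ.natDegree ≤ ψ.natDegree) : trunc ν φ = μ := by
  obtain ⟨ψ, hψ, hdeg⟩ := hex
  have hm : φ.Monic := hφ.1
  have hd : 0 < φ.natDegree := key_deg_pos hμ hφ
  have hmin := hφ.2.1
  have hφeq : μ φ = ν φ := by
    rcases eq_or_lt_of_le (hlt.1 φ) with h | h
    · exact h
    exact absurd ⟨hm, h, fun χ hχm hχlt => le_trans hdeg (hψ.2.2 χ hχm hχlt)⟩ hnot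
  have loweq : ∀ a : K[X], a.natDegree < φ.natDegree → μ a = ν a := by
    intro a ha
    exact low_deg_eq hμ hν hlt.1 hψ.2.2 a (by omega)
  have hpow : ∀ s : ℕ, μ (φ ^ s) = ν (φ ^ s) := by
    intro s
    induction s with
    | zero => rw [pow_zero, hμ.one', hν.one']
    | succ s ih => rw [pow_succ, hμ.mul', hν.mul', ih, hφeq]
  funext f
  rw [← key_trunc_eq hμ hm hd hmin f]
  refine Finset.inf_congr rfl fun s _ => ?_
  rw [hν.mul', hμ.mul', loweq _ (natDegree_qCoeff hm hd f s), hpow]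

end Parts

section Part3

variable {μ ν : K[X] → WithTop Λ} {φ : K[X]}

/-- Part (3) of Statement 5. -/
lemma part3 (hμ : IsValuation μ) (hν : IsValuation ν) (hlt : ValLT μ ν)
    (hφ : IsMLVKey μ φ) (hex : ∃ ψ ∈ PhiSet μ ν, ψ.natDegree < φ.natDegree) :
    ∃ f g : K[X], trunc ν φ (f * g) ≠ trunc ν φ f + trunc ν φ g := by
  obtain ⟨χ, hψ, hmd⟩ := hex
  have hm : φ.Monic := hφ.1
  have hd : 0 < φ.natDegree := key_deg_pos hμ hφ
  have hmin := hφ.2.1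
  have hirr := hφ.2.2.2
  have hχm : χ.Monic := hψ.1
  have hχlt : μ χ < ν χ := hψ.2.1
  have hsupp : ∀ a : K[X], a ≠ 0 → μ a ≠ ⊤ := supp_zero hμ hν hlt
  have hχd : 0 < χ.natDegree := by
    by_contra h
    push_neg at h
    have h1 : χ = 1 := monic_natDegree_zero_eq_one hχm (by omega)
    rw [h1, hμ.one', hν.one'] at hχlt
    exact lt_irrefl _ hχlt
  have loweq_m : ∀ a : K[X], a.natDegree < χ.natDegree → μ a = ν a :=
    low_deg_eq hμ hν hlt.1 hψ.2.2
  -- χ is μ-minimal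
  have hχmin : ∀ f : K[X], f ≠ 0 → f.natDegree < χ.natDegree → ¬ VDvd μ χ f := by
    rintro f hf0 hfd ⟨q, hq⟩
    have hμf : μ f ≠ ⊤ := hsupp f hf0
    have hq0 : q ≠ 0 := by
      rintro rfl
      rw [VEquiv, zero_mul, sub_zero] at hq
      exact lt_irrefl _ hq
    have hμqχ : μ (q * χ) = μ f := hμ.eq_of_equiv hq
    have hνf : ν f = μ f := (loweq_m f hfd).symm
    have hνlt : ν f < ν (f - q * χ) := by
      rw [hνf]
      exact lt_of_lt_of_le hq (hlt.1 _)
    have hνqχ : ν (q * χ) = ν f := hν.eq_of_equiv hνlt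
    have hcontra : μ q + μ χ < ν q + ν χ := by
      rw [add_comm (μ q), add_comm (ν q)]
      exact wt_add_lt_add hχlt (hlt.1 q) (hsupp q hq0)
    rw [← hμ.mul', ← hν.mul', hμqχ, hνqχ, hνf] at hcontra
    exact lt_irrefl _ hcontra
  -- Euclidean division of φ by χ
  set qt := φ /ₘ χ with hqtdef
  set e₀ := φ %ₘ χ with he₀def
  have hmodφ : e₀ + χ * qt = φ := modByMonic_add_div φ χ
  have he₀d : e₀.natDegree < χ.natDegree := by
    by_cases h : e₀ = 0
    · rw [h]; simpa using hχd
    · exact natDegree_lt_natDegree h (degree_modByMonic_lt φ hχm)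
  have hqt0 : qt ≠ 0 := by
    intro h0
    have h1 := (divByMonic_eq_zero_iff hχm).mp h0
    exact absurd h1 (not_lt.mpr (degree_lt_of_natDegree_lt hm.ne_zero hmd).le)
  have hμφt : μ φ ≠ ⊤ := hsupp φ hm.ne_zero
  have htt : μ φ = min (μ (qt * χ)) (μ e₀) := by
    have h1 := two_term hμ hχmin qt he₀d
    rw [show qt * χ + e₀ = φ by linear_combination hmodφ] at h1
    exact h1
  have hμφe : μ φ ≤ μ e₀ := htt ▸ min_le_right _ _
  have hμφq : μ φ ≤ μ (qt * χ) := htt ▸ min_le_left _ _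
  -- ¬ (χ |_μ φ)
  have hnd : ¬ VDvd μ χ φ := by
    rintro ⟨q, hq⟩
    have hμqχ : μ (q * χ) = μ φ := hμ.eq_of_equiv hq
    have hq0 : q ≠ 0 := by
      rintro rfl
      rw [zero_mul, hμ.zero'] at hμqχ
      exact hμφt hμqχ.symm
    have hdq : VDvd μ φ (q * χ) := by
      refine ⟨1, ?_⟩
      rw [VEquiv, one_mul, show q * χ - φ = -(φ - q * χ) by ring, hμ.neg', hμqχ]
      exact hq
    rcases hirr q χ hdq with h | h
    · obtain ⟨q'', hq''⟩ := h
      have hμχt : μ χ ≠ ⊤ := hsupp χ hχm.ne_zero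
      have h5 : μ φ < μ ((q - q'' * φ) * χ) := by
        rw [hμ.mul']
        calc μ φ = μ q + μ χ := by rw [← hμ.mul', hμqχ]
          _ < μ (q - q'' * φ) + μ χ := wt_add_lt_add hq'' le_rfl hμχt
      have h6 : μ φ < μ (φ - q'' * χ * φ) := by
        have he : φ - q'' * χ * φ = (φ - q * χ) + (q - q'' * φ) * χ := by ring
        rw [he]
        exact lt_of_lt_of_le (lt_min hq h5) (hμ.min_le_add _ _)
      have h7 : μ φ + 0 < μ φ + μ (1 - q'' * χ) := by
        rw [add_zero, ← hμ.mul', show φ * (1 - q'' * χ) = φ - q'' * χ * φ by ring]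
        exact h6
      have h8 : (0 : WithTop Λ) < μ (1 - q'' * χ) :=
        (WithTop.add_lt_add_iff_left hμφt).mp h7
      refine hχmin 1 one_ne_zero (by simpa [natDegree_one] using hχd) ⟨q'', ?_⟩
      rw [VEquiv, hμ.one']
      exact h8
    · exact hmin χ hχm.ne_zero hmd h
  -- criterion: μ e₀ = μ φ
  have he₀val : μ e₀ = μ φ := by
    refine le_antisymm ?_ hμφe
    by_contra h'
    push_neg at h'
    refine hnd ⟨qt, ?_⟩
    rw [VEquiv, show φ - qt * χ = e₀ by linear_combination -hmodφ]
    exact h'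
  -- μ φ = ν φ
  have hqtχlt : μ (qt * χ) < ν (qt * χ) := by
    rw [hμ.mul', hν.mul', add_comm (μ qt), add_comm (ν qt)]
    exact wt_add_lt_add hχlt (hlt.1 qt) (hsupp qt hqt0)
  have hφeq : μ φ = ν φ := by
    rcases eq_or_lt_of_le (hlt.1 φ) with h | h
    · exact h
    exfalso
    have h1 : ν e₀ = μ φ := by rw [← loweq_m e₀ he₀d, he₀val]
    have h2 : min (ν φ) (ν (qt * χ)) ≤ ν e₀ := by
      have h3 := hν.min_le_sub φ (qt * χ)
      rwa [show φ - qt * χ = e₀ by linear_combination -hmodφ] at h3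
    have h3 : ν (qt * χ) ≤ μ φ := by
      by_contra h4
      push_neg at h4
      have h5 : μ φ < min (ν φ) (ν (qt * χ)) := lt_min h h4
      have h6 := lt_of_lt_of_le h5 h2
      rw [h1] at h6
      exact lt_irrefl _ h6
    exact absurd (lt_of_le_of_lt hμφq hqtχlt) (not_lt.mpr h3)
  -- the failing pair
  refine ⟨χ, qt, ?_⟩
  have hWχ : trunc ν φ χ = ν χ := trunc_of_natDegree_lt hν hm hd hmd
  have hqtd : qt.natDegree < φ.natDegree := by
    rw [hqtdef, natDegree_divByMonic φ hχm]
    omega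
  have hWqt : trunc ν φ qt = ν qt := trunc_of_natDegree_lt hν hm hd hqtd
  have hde₀ : (-e₀).degree < φ.degree := by
    refine degree_lt_of_natDegree_lt hm.ne_zero ?_
    rw [natDegree_neg]
    omega
  have hd1 : (1 : K[X]).degree < φ.degree := by
    refine degree_lt_of_natDegree_lt hm.ne_zero ?_
    rw [natDegree_one]
    exact hd
  have hcoeff : ∀ s : ℕ, qCoeff φ (χ * qt) s
      = (if s = 0 then -e₀ else 0) + (if s = 1 then 1 else 0) := by
    intro s
    rw [show χ * qt = (-e₀) * φ ^ 0 + 1 * φ ^ 1 by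
        rw [pow_zero, pow_one]; linear_combination hmodφ,
      qCoeff_add hm, qCoeff_mul_pow hm hde₀, qCoeff_mul_pow hm hd1]
  have hWprod : trunc ν φ (χ * qt) = μ φ := by
    refine le_antisymm ?_ (Finset.le_inf fun s _ => ?_)
    · have h1 := trunc_le_term hν hm hd (χ * qt) 0
      rw [hcoeff 0, if_pos rfl, if_neg Nat.zero_ne_one, add_zero, pow_zero, mul_one,
        hν.neg', ← loweq_m e₀ he₀d, he₀val] at h1
      exact h1
    · rw [hcoeff s]
      rcases s with _ | _ | n
      · rw [if_pos rfl, if_neg Nat.zero_ne_one, add_zero, pow_zero, mul_one, hν.neg',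
          ← loweq_m e₀ he₀d, he₀val]
      · rw [if_neg Nat.one_ne_zero, if_pos rfl, zero_add, pow_one, one_mul, hφeq]
      · rw [if_neg (show ¬ (n + 1 + 1) = 0 by omega), if_neg (show ¬ (n + 1 + 1) = 1 by omega),
          add_zero, zero_mul, hν.zero']
        exact le_top
  have hne : μ φ < ν χ + ν qt := by
    calc μ φ ≤ μ (qt * χ) := hμφq
      _ < ν (qt * χ) := hqtχlt
      _ = ν χ + ν qt := by rw [hν.mul', add_comm]
  rw [hWprod, hWχ, hWqt]
  exact hne.ne

end Part3
variable [Module ℚ Λ]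

/-- for `μ < ν` and `φ ∈ KP(μ)`:
(1) if `φ ∈ Φ_{μ,ν}` then `ν_φ` is a valuation equal to `[μ; φ, ν φ]`, and `μ < ν_φ ≤ ν`;
(2) if `φ ∉ Φ_{μ,ν}` and `deg φ ≤ deg Φ_{μ,ν}` then `ν_φ = μ`;
(3) if `deg φ > deg Φ_{μ,ν}` then `ν_φ` is not a valuation (multiplicativity fails). -/
theorem stmt5 (μ ν : K[X] → WithTop Λ) (hμ : IsValuation μ) (hν : IsValuation ν)
    (hlt : ValLT μ ν) (φ : K[X]) (hφ : IsMLVKey μ φ) :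
    (φ ∈ PhiSet μ ν →
      IsValuation (trunc ν φ) ∧ trunc ν φ = augVal μ φ (ν φ) ∧
        ValLT μ (trunc ν φ) ∧ ValLE (trunc ν φ) ν) ∧
    (φ ∉ PhiSet μ ν → (∃ ψ ∈ PhiSet μ ν, φ.natDegree ≤ ψ.natDegree) → trunc ν φ = μ) ∧
    ((∃ ψ ∈ PhiSet μ ν, ψ.natDegree < φ.natDegree) →
      ∃ f g : K[X], trunc ν φ (f * g) ≠ trunc ν φ f + trunc ν φ g) :=
  ⟨fun hin => part1 hμ hν hlt hφ hin,
    fun hnot hex => part2 hμ hν hlt hφ hnot hex,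
    fun hex => part3 hμ hν hlt hφ hex⟩

end KeyPolPaper
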